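/- Let G be the undirected one-dimensional lattice: the simple graph on vertex set ℤ in which i and j are adjacent if and only if |i − j| = 1. Then for every natural number n ≥ 1 the Connes distance between 0 and n is given by dist_C(0, n) = √(n²/2) if n is even, and dist_C(0, n) = √((n² + 1)/2) if n is odd. Equivalently, dist_C(0,n) = √⌊n²/2⌋ for n even and √(⌊n²/2⌋ + 1) for n odd. -/

import Mathlib

/-- Two-variable Cauchy–Schwarz-type bound. -/
lemma pcs' (a b x y c s : ℝ) (hs : 0 ≤ s) (hc : 0 ≤ c)
    (h : a ^ 2 + b ^ 2 ≤ c ^ 2 * s ^ 2) (hxy : x ^ 2 + y ^ 2 ≤ 1) :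
    a * x + b * y ≤ c * s := by
  nlinarith [sq_nonneg (a * y - b * x), sq_nonneg (a * x + b * y + c * s),
    mul_nonneg hc hs, sq_nonneg (a * x + b * y - c * s), sq_nonneg x, sq_nonneg y]

lemma even_ub (g : ℤ → ℝ)
    (hg : ∀ i : ℤ, (g (i + 1) - g i) ^ 2 + (g (i - 1) - g i) ^ 2 ≤ 1) (k : ℕ) :
    g (2 * k) - g 0 ≤ k * Real.sqrt 2 := by
  induction k with
  | zero => simp
  | succ k ih =>
    have h1 := hg (2 * (k : ℤ) + 1)
    rw [show (2 * (k:ℤ) + 1 + 1) = 2 * k + 2 by ring,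
        show (2 * (k:ℤ) + 1 - 1) = 2 * k by ring] at h1
    have hxy : (g (2*(k:ℤ)+1) - g (2*(k:ℤ))) ^ 2 + (g (2*(k:ℤ)+2) - g (2*(k:ℤ)+1)) ^ 2 ≤ 1 := by
      nlinarith [h1]
    have key := pcs' 1 1 (g (2*(k:ℤ)+1) - g (2*(k:ℤ))) (g (2*(k:ℤ)+2) - g (2*(k:ℤ)+1)) 1
      (Real.sqrt 2) (Real.sqrt_nonneg 2) zero_le_one
      (by rw [Real.sq_sqrt (by norm_num : (0:ℝ) ≤ 2)]; norm_num) hxy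
    have hcast : (2 * ((k:ℕ)+1 : ℕ) : ℤ) = 2 * (k:ℤ) + 2 := by push_cast; ring
    rw [hcast]
    push_cast
    linarith [key, ih]

lemma odd_step (K J s G x1 y1 y2 : ℝ) (hs : 0 ≤ s)
    (hsN : s ^ 2 = 2 * K ^ 2 + 2 * K + 1) (hJ : 0 ≤ J) (hJK : J + 1 ≤ K)
    (hxy1 : x1 ^ 2 + y1 ^ 2 ≤ 1) (hxy2 : y1 ^ 2 + y2 ^ 2 ≤ 1)
    (ih : K * (K + 1) * G + J * (K + 1) * x1 ≤ J * (K + 1) * s) :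
    K * (K + 1) * (G + x1 + y1) + (J + 1) * (K + 1) * y2 ≤ (J + 1) * (K + 1) * s := by
  have A := pcs' ((K-J)*(K+1)) ((K-J)*K) x1 y1 (K-J) s hs (by linarith)
    (le_of_eq (by rw [hsN]; ring)) hxy1
  have B := pcs' ((J+1)*K) ((J+1)*(K+1)) y1 y2 (J+1) s hs
    (by positivity) (le_of_eq (by rw [hsN]; ring)) hxy2
  nlinarith [A, B, ih]

lemma odd_ub_aux (g : ℤ → ℝ)
    (hg : ∀ i : ℤ, (g (i + 1) - g i) ^ 2 + (g (i - 1) - g i) ^ 2 ≤ 1)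
    (k : ℕ) (s : ℝ) (hs : 0 ≤ s)
    (hsN : s ^ 2 = 2 * (k:ℝ) ^ 2 + 2 * k + 1) :
    ∀ j : ℕ, j ≤ k →
      (k:ℝ) * ((k:ℝ) + 1) * (g (2 * (j:ℤ)) - g 0)
        + (j:ℝ) * ((k:ℝ) + 1) * (g (2 * (j:ℤ) + 1) - g (2 * (j:ℤ)))
        ≤ (j:ℝ) * ((k:ℝ) + 1) * s := by
  intro j
  induction j with
  | zero => intro _; simp
  | succ j ih =>
    intro hj
    have hJK : (j:ℝ) + 1 ≤ (k:ℝ) := by exact_mod_cast hj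
    have ihj := ih (by omega)
    have h1 := hg (2 * (j:ℤ) + 1)
    rw [show (2 * (j:ℤ) + 1 + 1) = 2 * j + 2 by ring,
        show (2 * (j:ℤ) + 1 - 1) = 2 * j by ring] at h1
    have h2 := hg (2 * (j:ℤ) + 2)
    rw [show (2 * (j:ℤ) + 2 + 1) = 2 * j + 3 by ring,
        show (2 * (j:ℤ) + 2 - 1) = 2 * j + 1 by ring] at h2
    have hxy1 : (g (2*(j:ℤ)+1) - g (2*(j:ℤ))) ^ 2
        + (g (2*(j:ℤ)+2) - g (2*(j:ℤ)+1)) ^ 2 ≤ 1 := by nlinarith [h1]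
    have hxy2 : (g (2*(j:ℤ)+2) - g (2*(j:ℤ)+1)) ^ 2
        + (g (2*(j:ℤ)+3) - g (2*(j:ℤ)+2)) ^ 2 ≤ 1 := by nlinarith [h2]
    have key := odd_step (k:ℝ) (j:ℝ) s (g (2*(j:ℤ)) - g 0)
      (g (2*(j:ℤ)+1) - g (2*(j:ℤ))) (g (2*(j:ℤ)+2) - g (2*(j:ℤ)+1))
      (g (2*(j:ℤ)+3) - g (2*(j:ℤ)+2)) hs hsN (Nat.cast_nonneg j) hJK hxy1 hxy2 ihj
    have hcast : (2 * ((j:ℕ)+1 : ℕ) : ℤ) = 2 * (j:ℤ) + 2 := by push_cast; ring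
    rw [hcast, show (2 * (j:ℤ) + 2 + 1) = 2 * j + 3 by ring]
    push_cast
    nlinarith [key]

lemma odd_ub (g : ℤ → ℝ)
    (hg : ∀ i : ℤ, (g (i + 1) - g i) ^ 2 + (g (i - 1) - g i) ^ 2 ≤ 1)
    (k : ℕ) :
    g (2 * (k:ℤ) + 1) - g 0 ≤ Real.sqrt (2 * (k:ℝ) ^ 2 + 2 * k + 1) := by
  rcases Nat.eq_zero_or_pos k with hk | hk
  · subst hk
    have h := hg 1
    norm_num at h ⊢
    have h1 : (g 1 - g 0) ^ 2 ≤ 1 := by nlinarith [h, sq_nonneg (g 2 - g 1)]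
    nlinarith [h1, sq_nonneg (g 1 - g 0 - 1)]
  · set s := Real.sqrt (2 * (k:ℝ) ^ 2 + 2 * k + 1) with hsdef
    have hN : (0:ℝ) ≤ 2 * (k:ℝ) ^ 2 + 2 * k + 1 := by positivity
    have hsN : s ^ 2 = 2 * (k:ℝ) ^ 2 + 2 * k + 1 := Real.sq_sqrt hN
    have key := odd_ub_aux g hg k s (Real.sqrt_nonneg _) hsN k le_rfl
    have hkpos : (0:ℝ) < (k:ℝ) * ((k:ℝ) + 1) := by
      have : (1:ℝ) ≤ (k:ℝ) := by exact_mod_cast hk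
      nlinarith
    nlinarith [key]

lemma even_wit (k : ℕ) :
    ∃ f : ℤ → ℝ, (∀ i : ℤ, (f (i + 1) - f i) ^ 2 + (f (i - 1) - f i) ^ 2 ≤ 1) ∧
      |f (2 * (k:ℤ)) - f 0| = (k:ℝ) * Real.sqrt 2 := by
  refine ⟨fun i => Real.sqrt 2 / 2 * (i:ℝ), ?_, ?_⟩
  · intro i
    have h2 : Real.sqrt 2 ^ 2 = 2 := Real.sq_sqrt (by norm_num)
    push_cast
    ring_nf
    nlinarith [h2]
  · push_cast
    rw [mul_zero, sub_zero, abs_of_nonneg (by positivity)]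
    ring

lemma odd_wit (k : ℕ) :
    ∃ f : ℤ → ℝ, (∀ i : ℤ, (f (i + 1) - f i) ^ 2 + (f (i - 1) - f i) ^ 2 ≤ 1) ∧
      |f (2 * (k:ℤ) + 1) - f 0| = Real.sqrt (2 * (k:ℝ) ^ 2 + 2 * k + 1) := by
  set s := Real.sqrt (2 * (k:ℝ) ^ 2 + 2 * k + 1) with hsdef
  have hN : (0:ℝ) < 2 * (k:ℝ) ^ 2 + 2 * k + 1 := by positivity
  have hspos : 0 < s := Real.sqrt_pos.mpr hN
  have hsN : s ^ 2 = 2 * (k:ℝ) ^ 2 + 2 * k + 1 := Real.sq_sqrt hN.le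
  have hsne : s ≠ 0 := ne_of_gt hspos
  refine ⟨fun i => (((k:ℝ) + 1) * (((i + 1) / 2 : ℤ) : ℝ) + (k:ℝ) * ((i / 2 : ℤ) : ℝ)) / s,
    ?_, ?_⟩
  · intro i
    simp only
    rcases Int.even_or_odd i with ⟨m, hm⟩ | ⟨m, hm⟩
    · have e1 : ((i + 1) / 2 : ℤ) = i / 2 := by omega
      have e2 : ((i + 1 + 1) / 2 : ℤ) = i / 2 + 1 := by omega
      have e3 : ((i - 1 + 1) / 2 : ℤ) = i / 2 := by omega
      have e4 : ((i - 1) / 2 : ℤ) = i / 2 - 1 := by omega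
      rw [e1, e2, e3, e4]
      push_cast
      rw [div_sub_div_same, div_sub_div_same, div_pow, div_pow, ← add_div,
        div_le_one (by positivity), hsN]
      nlinarith [sq_nonneg ((k:ℝ))]
    · have e1 : ((i + 1) / 2 : ℤ) = i / 2 + 1 := by omega
      have e2 : ((i + 1 + 1) / 2 : ℤ) = i / 2 + 1 := by omega
      have e3 : ((i - 1 + 1) / 2 : ℤ) = i / 2 := by omega
      have e4 : ((i - 1) / 2 : ℤ) = i / 2 := by omega
      rw [e1, e2, e3, e4]
      push_cast
      rw [div_sub_div_same, div_sub_div_same, div_pow, div_pow, ← add_div,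
        div_le_one (by positivity), hsN]
      nlinarith [sq_nonneg ((k:ℝ))]
  · simp only
    have e1 : ((2 * (k:ℤ) + 1 + 1) / 2 : ℤ) = k + 1 := by omega
    have e2 : ((2 * (k:ℤ) + 1) / 2 : ℤ) = k := by omega
    have e3 : ((0 + 1) / 2 : ℤ) = 0 := by decide
    have e4 : ((0 : ℤ) / 2 : ℤ) = 0 := by decide
    rw [e1, e2, e3, e4]
    push_cast
    rw [mul_zero, mul_zero, add_zero, zero_div, sub_zero]
    rw [abs_of_nonneg (by positivity)]
    field_simp
    linear_combination -hsN

/-- On the undirected one-dimensional lattice `ℤ` (where `i ~ j` iff `|i - j| = 1`, so a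
function `f : ℤ → ℝ` is admissible iff `(f (i+1) - f i)² + (f (i-1) - f i)² ≤ 1` for all `i`),
the Connes distance between `0` and `n ≥ 1` is `√(n²/2)` for `n` even and `√((n²+1)/2)` for
`n` odd. -/
theorem stmt_17 (n : ℕ) (hn : 1 ≤ n) :
    sSup {r : ℝ | ∃ f : ℤ → ℝ,
        (∀ i : ℤ, (f (i + 1) - f i) ^ 2 + (f (i - 1) - f i) ^ 2 ≤ 1) ∧
        r = |f (n : ℤ) - f 0|} =
      if Even n then Real.sqrt ((n : ℝ) ^ 2 / 2)
      else Real.sqrt (((n : ℝ) ^ 2 + 1) / 2) := by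
  by_cases hpar : Even n
  · rw [if_pos hpar]
    obtain ⟨k, hk⟩ := hpar
    have hkn : ((n:ℕ) : ℤ) = 2 * (k:ℤ) := by push_cast [hk]; ring
    have hT : Real.sqrt ((n : ℝ) ^ 2 / 2) = (k:ℝ) * Real.sqrt 2 := by
      have h1 : ((n:ℝ) ^ 2 / 2) = ((k:ℝ) * Real.sqrt 2) ^ 2 := by
        rw [mul_pow, Real.sq_sqrt (by norm_num : (0:ℝ) ≤ 2)]
        have : (n:ℝ) = 2 * k := by push_cast [hk]; ring
        rw [this]; ring
      rw [h1, Real.sqrt_sq (by positivity)]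
    rw [hT]
    have hub : ∀ r ∈ {r : ℝ | ∃ f : ℤ → ℝ,
        (∀ i : ℤ, (f (i + 1) - f i) ^ 2 + (f (i - 1) - f i) ^ 2 ≤ 1) ∧
        r = |f (n : ℤ) - f 0|}, r ≤ (k:ℝ) * Real.sqrt 2 := by
      rintro r ⟨g, hg, rfl⟩
      rw [hkn]
      have h1 := even_ub g hg k
      have hgneg : ∀ i : ℤ, ((fun i => -g i) (i + 1) - (fun i => -g i) i) ^ 2
          + ((fun i => -g i) (i - 1) - (fun i => -g i) i) ^ 2 ≤ 1 := by
        intro i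
        simp only
        have := hg i
        nlinarith [this]
      have h2 := even_ub (fun i => -g i) hgneg k
      rw [abs_le]
      constructor <;> [linarith; linarith]
    obtain ⟨f, hf, hfval⟩ := even_wit k
    have hmem : (k:ℝ) * Real.sqrt 2 ∈ {r : ℝ | ∃ f : ℤ → ℝ,
        (∀ i : ℤ, (f (i + 1) - f i) ^ 2 + (f (i - 1) - f i) ^ 2 ≤ 1) ∧
        r = |f (n : ℤ) - f 0|} := by
      exact ⟨f, hf, by rw [hkn, hfval]⟩
    exact le_antisymm (csSup_le ⟨_, hmem⟩ hub) (le_csSup ⟨_, hub⟩ hmem)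
  · rw [if_neg hpar]
    obtain ⟨k, hk⟩ := Nat.not_even_iff_odd.mp hpar
    have hkn : ((n:ℕ) : ℤ) = 2 * (k:ℤ) + 1 := by push_cast [hk]; ring
    have hT : Real.sqrt (((n : ℝ) ^ 2 + 1) / 2)
        = Real.sqrt (2 * (k:ℝ) ^ 2 + 2 * k + 1) := by
      congr 1
      have : (n:ℝ) = 2 * k + 1 := by push_cast [hk]; ring
      rw [this]; ring
    rw [hT]
    have hub : ∀ r ∈ {r : ℝ | ∃ f : ℤ → ℝ,
        (∀ i : ℤ, (f (i + 1) - f i) ^ 2 + (f (i - 1) - f i) ^ 2 ≤ 1) ∧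
        r = |f (n : ℤ) - f 0|}, r ≤ Real.sqrt (2 * (k:ℝ) ^ 2 + 2 * k + 1) := by
      rintro r ⟨g, hg, rfl⟩
      rw [hkn]
      have h1 := odd_ub g hg k
      have hgneg : ∀ i : ℤ, ((fun i => -g i) (i + 1) - (fun i => -g i) i) ^ 2
          + ((fun i => -g i) (i - 1) - (fun i => -g i) i) ^ 2 ≤ 1 := by
        intro i
        simp only
        have := hg i
        nlinarith [this]
      have h2 := odd_ub (fun i => -g i) hgneg k
      rw [abs_le]
      constructor <;> [linarith; linarith]
    obtain ⟨f, hf, hfval⟩ := odd_wit k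
    have hmem : Real.sqrt (2 * (k:ℝ) ^ 2 + 2 * k + 1) ∈ {r : ℝ | ∃ f : ℤ → ℝ,
        (∀ i : ℤ, (f (i + 1) - f i) ^ 2 + (f (i - 1) - f i) ^ 2 ≤ 1) ∧
        r = |f (n : ℤ) - f 0|} := by
      exact ⟨f, hf, by rw [hkn, hfval]⟩
    exact le_antisymm (csSup_le ⟨_, hmem⟩ hub) (le_csSup ⟨_, hub⟩ hmem)
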